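/- Let F be a field and A an n×n matrix over F. Writing adj(X·I − A) = Σ_{k=0}^{n−1} Bₖ Xᵏ and P(X) = det(X·I − A) = Σ_{k=0}^{n} pₖ' Xᵏ (coefficients indexed by increasing powers), one has tr(Bₖ) = (k+1)·p'_{k+1} for every 0 ≤ k ≤ n−1. -/

import Mathlib

open Polynomial Matrix

private lemma my_derivative_finset_prod {R ι : Type*} [CommRing R] [DecidableEq ι]
    (s : Finset ι) (f : ι → R[X]) :
    derivative (∏ i ∈ s, f i) =
      ∑ i ∈ s, (∏ j ∈ s.erase i, f j) * derivative (f i) := by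
  classical
  induction s using Finset.induction_on with
  | empty => simp
  | insert a s ha ih =>
    rw [Finset.prod_insert ha, derivative_mul, ih, Finset.sum_insert ha,
      Finset.erase_insert ha, Finset.mul_sum]
    congr 1
    · exact mul_comm _ _
    · refine Finset.sum_congr rfl fun i hi => ?_
      rw [Finset.erase_insert_of_ne]
      · rw [Finset.prod_insert (fun h => ha (Finset.mem_of_mem_erase h)), mul_assoc]
      · exact fun h => ha (h ▸ hi)

private lemma my_derivative_det {R : Type*} [CommRing R] {n : ℕ}
    (M : Matrix (Fin n) (Fin n) R[X]) :
    derivative M.det = ∑ i, (M.updateRow i fun j => derivative (M i j)).det := by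
  classical
  simp only [Matrix.det_apply', map_sum, derivative_mul, Polynomial.derivative_intCast,
    zero_mul, zero_add]
  rw [Finset.sum_comm]
  refine Finset.sum_congr rfl fun σ _ => ?_
  rw [my_derivative_finset_prod, Finset.mul_sum]
  rw [← Equiv.sum_comp σ.symm (fun i =>
    (Equiv.Perm.sign σ : ℤ) * ((∏ j ∈ Finset.univ.erase i, M (σ j) j) * derivative (M (σ i) i)))]
  refine Finset.sum_congr rfl fun i _ => ?_
  congr 1
  have hprod : ∀ j, (M.updateRow i fun j => derivative (M i j)) (σ j) j =
      if j = σ.symm i then derivative (M i j) else M (σ j) j := by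
    intro j
    rw [Matrix.updateRow_apply]
    by_cases h : j = σ.symm i
    · simp [h]
    · rw [if_neg h, if_neg (fun hh => h (by simp [← hh]))]
  rw [Finset.prod_congr rfl (fun j _ => hprod j),
    ← Finset.mul_prod_erase Finset.univ _ (Finset.mem_univ (σ.symm i)),
    if_pos rfl]
  rw [Finset.prod_congr rfl (fun j hj => if_neg (Finset.ne_of_mem_erase hj))]
  simp [mul_comm]

/-- Writing `adj(X·I − A) = Σ_{k=0}^{n−1} Bₖ Xᵏ` and `P(X) = Σ_{k=0}^{n} p'ₖ Xᵏ` for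
the characteristic polynomial, one has `tr(Bₖ) = (k+1)·p'_{k+1}` for `0 ≤ k ≤ n−1`. -/
theorem trace_adjugate_charmatrix_coeff
    (F : Type*) [Field F] (n : ℕ) (A : Matrix (Fin n) (Fin n) F)
    (B : ℕ → Matrix (Fin n) (Fin n) F)
    (hB : ∀ k, B k = Matrix.of fun i j => ((Matrix.adjugate (Matrix.charmatrix A)) i j).coeff k) :
    ∀ k : ℕ, k < n →
      (B k).trace = ((k : F) + 1) * (Matrix.charpoly A).coeff (k + 1) := by
  have key : derivative (A.charpoly) = (adjugate (charmatrix A)).trace := by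
    rw [Matrix.charpoly, my_derivative_det]
    simp only [Matrix.trace, Matrix.diag]
    refine Finset.sum_congr rfl fun i _ => ?_
    rw [Matrix.adjugate_apply]
    congr 1
    refine Matrix.ext fun k j => ?_
    rw [Matrix.updateRow_apply, Matrix.updateRow_apply]
    by_cases h : k = i
    · rw [if_pos h, if_pos h]
      by_cases hj : j = i
      · subst hj; rw [charmatrix_apply_eq]; simp
      · rw [charmatrix_apply_ne _ _ _ (Ne.symm hj)]
        simp [Pi.single_apply, hj]
    · rw [if_neg h, if_neg h]
  intro k hk
  have := congrArg (fun p => Polynomial.coeff p k) key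
  simp only [Polynomial.coeff_derivative] at this
  rw [hB]
  have htr : (Matrix.of fun i j => ((adjugate (charmatrix A)) i j).coeff k).trace
      = ((adjugate (charmatrix A)).trace).coeff k := by
    rw [Matrix.trace, Matrix.trace, Polynomial.finset_sum_coeff]
    rfl
  rw [htr, ← this, mul_comm]
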